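/- The identity function is a unit for both operations ⊗ and ⊕ on ℒ∨(𝕀), and the mix rule holds: for all f, g ∈ ℒ∨(𝕀), f ⊗ g ≤ f ⊕ g, i.e. g(f(x)) ≤ (f ⊕ g)(x) for every x ∈ 𝕀. -/

import Mathlib

noncomputable section

instance : Fact ((0:ℝ) ≤ 1) := ⟨zero_le_one⟩

/-- `𝕀` is the real unit interval `[0,1]`, a complete lattice. -/
notation "𝕀" => unitInterval

/-- `f^∧(x) = ⨅_{x < x'} f x'`, the meet-continuous closure data of `f`. -/
def mCl (f : 𝕀 → 𝕀) : 𝕀 → 𝕀 :=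
  fun x => ⨅ y : {y : 𝕀 // x < y}, f y.1

/-- `f^∨(x) = ⨆_{x' < x} f x'`, the join-continuous closure data of `f`. -/
def jCl (f : 𝕀 → 𝕀) : 𝕀 → 𝕀 :=
  fun x => ⨆ y : {y : 𝕀 // y.1 < x}, f y.1

/-- `f` is join-continuous: it preserves all suprema. -/
def JoinCont (f : 𝕀 → 𝕀) : Prop :=
  ∀ S : Set 𝕀, f (sSup S) = ⨆ x ∈ S, f x

/-- `f` is meet-continuous: it preserves all infima. -/
def MeetCont (f : 𝕀 → 𝕀) : Prop :=
  ∀ S : Set 𝕀, f (sInf S) = ⨅ x ∈ S, f x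

/-- The right adjoint `f^ρ` of a join-continuous `f`. -/
def radj (f : 𝕀 → 𝕀) : 𝕀 → 𝕀 := fun y => sSup {x | f x ≤ y}

/-- The left adjoint `g^λ` of a meet-continuous `g`. -/
def ladj (g : 𝕀 → 𝕀) : 𝕀 → 𝕀 := fun y => sInf {x | y ≤ g x}

/-- `f* := (f^ρ)^∨`. -/
def starF (f : 𝕀 → 𝕀) : 𝕀 → 𝕀 := jCl (radj f)

/-- `f ⊗ g := g ∘ f`. -/
def otimes (f g : 𝕀 → 𝕀) : 𝕀 → 𝕀 := g ∘ f

/-- `f ⊕ g := (g^∧ ∘ f^∧)^∨`. -/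
def oplus (f g : 𝕀 → 𝕀) : 𝕀 → 𝕀 := jCl (mCl g ∘ mCl f)

/-- A tuple is closed if `f_{i,j} ⊗ f_{j,k} ≤ f_{i,k}` for `i < j < k`. -/
def ClosedT (d : ℕ) (f : Fin d → Fin d → (𝕀 → 𝕀)) : Prop :=
  ∀ i j k : Fin d, i < j → j < k → ∀ x, otimes (f i j) (f j k) x ≤ f i k x

/-- A tuple is open if `f_{i,k} ≤ f_{i,j} ⊕ f_{j,k}` for `i < j < k`. -/
def OpenT (d : ℕ) (f : Fin d → Fin d → (𝕀 → 𝕀)) : Prop :=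
  ∀ i j k : Fin d, i < j → j < k → ∀ x, f i k x ≤ oplus (f i j) (f j k) x

/-- Pointwise order on the meaningful (`i < j`) entries of tuples. -/
def TLE (d : ℕ) (f g : Fin d → Fin d → (𝕀 → 𝕀)) : Prop :=
  ∀ i j : Fin d, i < j → ∀ x, f i j x ≤ g i j x

/-- Each meaningful entry of the tuple is join-continuous. -/
def TupleJC (d : ℕ) (f : Fin d → Fin d → (𝕀 → 𝕀)) : Prop :=
  ∀ i j : Fin d, i < j → JoinCont (f i j)

/-- `⊕`-value of a subdivision `ℓ₀ < ℓ₁ < … < ℓ_k`: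
`f_{ℓ₀,ℓ₁} ⊕ f_{ℓ₁,ℓ₂} ⊕ … ⊕ f_{ℓ_{k-1},ℓ_k}`. -/
def oplusChain {d : ℕ} (f : Fin d → Fin d → (𝕀 → 𝕀)) : List (Fin d) → (𝕀 → 𝕀)
  | [] => id
  | [_] => id
  | a :: b :: l => oplus (f a b) (oplusChain f (b :: l))

/-- Subdivisions of the interval `[i,j]`: strictly increasing lists from `i` to `j`. -/
def Subdiv (d : ℕ) (i j : Fin d) : Set (List (Fin d)) :=
  {L | L.Chain' (· < ·) ∧ L.head? = some i ∧ L.getLast? = some j}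

/-- The interior of a tuple: `interior(f)_{i,j}` is the infimum, over all subdivisions
`i = ℓ₀ < ℓ₁ < … < ℓ_k = j`, of `f_{ℓ₀,ℓ₁} ⊕ … ⊕ f_{ℓ_{k-1},ℓ_k}`. -/
def interiorT (d : ℕ) (f : Fin d → Fin d → (𝕀 → 𝕀)) : Fin d → Fin d → (𝕀 → 𝕀) :=
  fun i j => ⨅ L : Subdiv d i j, oplusChain f L.1

/-- The chain `C_f ⊆ 𝕀²` associated to a monotone `f : 𝕀 → 𝕀`. -/
def Cf2 (f : 𝕀 → 𝕀) : Set (𝕀 × 𝕀) :=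
  {p | jCl f p.1 ≤ p.2 ∧ p.2 ≤ mCl f p.1}

/-- `f_C^-(x) = ⨅ {y | (x,y) ∈ C}`. -/
def fCm (C : Set (𝕀 × 𝕀)) : 𝕀 → 𝕀 := fun x => sInf {y | (x, y) ∈ C}

/-- `f_C^+(x) = ⨆ {y | (x,y) ∈ C}`. -/
def fCp (C : Set (𝕀 × 𝕀)) : 𝕀 → 𝕀 := fun x => sSup {y | (x, y) ∈ C}

/-- Compatibility of a (fully extended) tuple: `f_{j,k} ∘ f_{i,j} ≤ f_{i,k}` for all `i,j,k`. -/
def Compatible (d : ℕ) (f : Fin d → Fin d → (𝕀 → 𝕀)) : Prop :=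
  ∀ i j k : Fin d, ∀ x, f j k (f i j x) ≤ f i k x

/-- The subset `C_f ⊆ 𝕀^d` associated to a compatible tuple. -/
def Cfd (d : ℕ) (f : Fin d → Fin d → (𝕀 → 𝕀)) : Set (Fin d → 𝕀) :=
  {x | ∀ i j : Fin d, f i j (x i) ≤ x j}

/-- `v(C)_{i,j}(x) = ⨅ {c_j | c ∈ C, c_i = x}`. -/
def vC (d : ℕ) (C : Set (Fin d → 𝕀)) (i j : Fin d) : 𝕀 → 𝕀 :=
  fun x => sInf {z | ∃ c ∈ C, c i = x ∧ c j = z}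

/-- Canonical extension of a tuple given on `i < j` to all pairs:
identity on the diagonal and `f_{j,i} := (f_{i,j})*` below it. -/
def extT (d : ℕ) (g : Fin d → Fin d → (𝕀 → 𝕀)) : Fin d → Fin d → (𝕀 → 𝕀) :=
  fun i j => if i < j then g i j else if j < i then starF (g j i) else id

/-- The one-step function `h_{x,y}`. -/
def oneStep (x y : 𝕀) : 𝕀 → 𝕀 := fun t => if t ≤ x then 0 else y


lemma jc_mono {f : 𝕀 → 𝕀} (hf : JoinCont f) : Monotone f := by
  intro a b hab
  have h := hf {a, b}
  rw [sSup_pair, sup_eq_right.mpr hab] at h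
  have : (⨆ x ∈ ({a, b} : Set 𝕀), f x) = f a ⊔ f b := by
    rw [iSup_insert, iSup_singleton]
  rw [this] at h
  exact le_sup_left.trans h.ge

lemma jc_zero {f : 𝕀 → 𝕀} (hf : JoinCont f) : f 0 = 0 := by
  have h := hf ∅
  have h2 : f ⊥ = ⊥ := by simpa using h
  exact h2

lemma jcl_eq {f : 𝕀 → 𝕀} (hf : JoinCont f) (x : 𝕀) : jCl f x = f x := by
  have hmono := jc_mono hf
  refine le_antisymm (iSup_le fun y => hmono y.2.le) ?_
  rcases eq_or_lt_of_le (bot_le : (⊥ : 𝕀) ≤ x) with h | h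
  · rw [← h]
    have : f (⊥ : 𝕀) = (⊥ : 𝕀) := jc_zero hf
    rw [this]; exact bot_le
  · have hsup : sSup (Set.Iio x) = x := by
      refine IsLUB.sSup_eq ⟨fun y hy => hy.le, fun b hb => ?_⟩
      by_contra hbx
      push_neg at hbx
      obtain ⟨y, hy1, hy2⟩ := exists_between hbx
      exact absurd (hb hy2) (not_le.mpr hy1)
    calc f x = f (sSup (Set.Iio x)) := by rw [hsup]
    _ = ⨆ y ∈ Set.Iio x, f y := hf _
    _ ≤ jCl f x := by
        refine iSup_le fun y => iSup_le fun hy => ?_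
        exact le_iSup (fun z : {z : 𝕀 // z.1 < x} => f z.1) ⟨y, hy⟩

lemma le_mcl {f : 𝕀 → 𝕀} (hf : Monotone f) (x : 𝕀) : f x ≤ mCl f x :=
  le_iInf fun y => hf y.2.le

lemma mcl_le {f : 𝕀 → 𝕀} {x y : 𝕀} (h : y < x) : mCl f y ≤ f x :=
  iInf_le (fun z : {z : 𝕀 // y < z} => f z.1) ⟨x, h⟩

lemma mcl_id : mCl (id : 𝕀 → 𝕀) = id := by
  funext x
  refine le_antisymm ?_ (le_mcl monotone_id x)
  by_contra h
  push_neg at h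
  obtain ⟨y, hy1, hy2⟩ := exists_between h
  exact absurd (mcl_le (f := (id : 𝕀 → 𝕀)) hy1) (not_le.mpr hy2)

lemma jcl_mcl {f : 𝕀 → 𝕀} (hf : JoinCont f) : jCl (mCl f) = f := by
  funext x
  refine le_antisymm (iSup_le fun y => mcl_le y.2) ?_
  rw [← jcl_eq hf x]
  exact iSup_mono fun y => le_mcl (jc_mono hf) y.1

lemma jc_comp {f g : 𝕀 → 𝕀} (hf : JoinCont f) (hg : JoinCont g) :
    JoinCont (g ∘ f) := by
  intro S
  have h1 : f (sSup S) = sSup (f '' S) := by rw [hf S, sSup_image]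
  calc (g ∘ f) (sSup S) = g (sSup (f '' S)) := by rw [Function.comp_apply, h1]
  _ = ⨆ z ∈ f '' S, g z := hg _
  _ = ⨆ x ∈ S, g (f x) := by rw [iSup_image]

/-- the identity is a unit for both `⊗` and `⊕` on `ℒ∨(𝕀)`, and the
mix rule `f ⊗ g ≤ f ⊕ g` holds. -/
theorem statement6 :
    (∀ f : 𝕀 → 𝕀, JoinCont f →
      otimes id f = f ∧ otimes f id = f ∧ oplus id f = f ∧ oplus f id = f) ∧
    (∀ f g : 𝕀 → 𝕀, JoinCont f → JoinCont g → ∀ x, g (f x) ≤ oplus f g x) := by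
  constructor
  · intro f hf
    refine ⟨rfl, rfl, ?_, ?_⟩
    · show jCl (mCl f ∘ mCl id) = f
      rw [mcl_id]
      exact jcl_mcl hf
    · show jCl (mCl id ∘ mCl f) = f
      rw [mcl_id]
      have : (id ∘ mCl f) = mCl f := Function.id_comp _
      rw [this]
      exact jcl_mcl hf
  · intro f g hf hg x
    have hgf : JoinCont (g ∘ f) := jc_comp hf hg
    have h1 : g (f x) = jCl (g ∘ f) x := (jcl_eq hgf x).symm
    rw [h1]
    refine iSup_mono fun y => ?_
    calc g (f y.1) ≤ g (mCl f y.1) := jc_mono hg (le_mcl (jc_mono hf) y.1)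
    _ ≤ mCl g (mCl f y.1) := le_mcl (jc_mono hg) _

end
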